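/- Fix y ∈ (0,1) and σ² > 0. For every μ ∈ (0,1), the map μ ↦ ℓ(μ,σ²;y) is differentiable at μ with derivative (1/σ²) · u(y,μ) · (y−μ), where u(y,μ) = (1/(μ(1−μ)))·(d(y;μ) + 1/(μ²(1−μ)²)). -/

import Mathlib

open Real

/-- The unit deviance of the simplex distribution. -/
noncomputable def simplexDev (y μ : ℝ) : ℝ :=
  (y - μ)^2 / (y * (1 - y) * μ^2 * (1 - μ)^2)

/-- The simplex log-likelihood for a single observation. -/
noncomputable def simplexLoglik (μ σ2 y : ℝ) : ℝ :=
  -(1/2) * Real.log (2 * Real.pi) - (1/2) * Real.log σ2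
    - (3/2) * Real.log (y * (1 - y)) - simplexDev y μ / (2 * σ2)

/-- The quantity u(y,μ). -/
noncomputable def simplexU (y μ : ℝ) : ℝ :=
  (1 / (μ * (1 - μ))) * (simplexDev y μ + 1 / (μ^2 * (1 - μ)^2))

/-- The derivative of the log-likelihood with respect to μ is (1/σ²)·u(y,μ)·(y−μ). -/
theorem simplexLoglik_hasDerivAt_mean (y σ2 : ℝ) (hy : y ∈ Set.Ioo (0:ℝ) 1)
    (hσ2 : 0 < σ2) (μ : ℝ) (hμ : μ ∈ Set.Ioo (0:ℝ) 1) :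
    HasDerivAt (fun m => simplexLoglik m σ2 y)
      ((1 / σ2) * simplexU y μ * (y - μ)) μ := by
  obtain ⟨hy0, hy1⟩ := hy
  obtain ⟨hμ0, hμ1⟩ := hμ
  have hy1' : (0:ℝ) < 1 - y := by linarith
  have hμ1' : (0:ℝ) < 1 - μ := by linarith
  have hden : y * (1 - y) * μ^2 * (1 - μ)^2 ≠ 0 := by positivity
  -- derivative of numerator (y - m)^2 at μ
  have hnum : HasDerivAt (fun m : ℝ => (y - m)^2) (2 * (y - μ) * (-1)) μ := by
    have h := ((hasDerivAt_id μ).const_sub y).pow 2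
    simpa [Pi.pow_def] using h
  -- derivative of denominator
  have hd : HasDerivAt (fun m : ℝ => y * (1 - y) * m^2 * (1 - m)^2)
      (y * (1 - y) * (2 * μ) * (1 - μ)^2
        + y * (1 - y) * μ^2 * (2 * (1 - μ) * (-1))) μ := by
    have h1 : HasDerivAt (fun m : ℝ => y * (1 - y) * m^2)
        (y * (1 - y) * (2 * μ)) μ := by
      simpa [mul_comm, mul_assoc] using ((hasDerivAt_pow 2 μ).const_mul (y * (1 - y)))
    have h2 : HasDerivAt (fun m : ℝ => (1 - m)^2) (2 * (1 - μ) * (-1)) μ := by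
      simpa [Pi.pow_def] using ((hasDerivAt_id μ).const_sub 1).pow 2
    simpa [Pi.mul_def, mul_comm, mul_assoc, mul_left_comm] using h1.mul h2
  have hdev : HasDerivAt (fun m : ℝ => simplexDev y m)
      ((2 * (y - μ) * (-1) * (y * (1 - y) * μ^2 * (1 - μ)^2)
        - (y - μ)^2 * (y * (1 - y) * (2 * μ) * (1 - μ)^2
            + y * (1 - y) * μ^2 * (2 * (1 - μ) * (-1))))
        / (y * (1 - y) * μ^2 * (1 - μ)^2)^2) μ := by
    simpa [simplexDev, Pi.div_def] using hnum.div hd hden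
  have h := ((hdev.div_const (2 * σ2)).const_sub
    (-(1/2) * Real.log (2 * Real.pi) - (1/2) * Real.log σ2
      - (3/2) * Real.log (y * (1 - y))))
  have heq : (1 / σ2) * simplexU y μ * (y - μ) =
      -(((2 * (y - μ) * (-1) * (y * (1 - y) * μ^2 * (1 - μ)^2)
        - (y - μ)^2 * (y * (1 - y) * (2 * μ) * (1 - μ)^2
            + y * (1 - y) * μ^2 * (2 * (1 - μ) * (-1))))
        / (y * (1 - y) * μ^2 * (1 - μ)^2)^2) / (2 * σ2)) := by
    unfold simplexU simplexDev
    field_simp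
    ring
  rw [heq]
  exact h.congr_deriv rfl |>.congr_of_eventuallyEq (by
    filter_upwards with m
    simp [simplexLoglik, sub_sub]) |>.congr_deriv rfl
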